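/- Let c, C > 0 with c ≤ C, let L > 0 and y ∈ (0, L), and suppose a, b > 0 solve the linear system a(1 − e^{−Cy}) = b(e^{−cy} − e^{−cL}) and aCe^{−Cy} + bce^{−cy} = 1. Define P(x) = a(1 − e^{−Cx}) for 0 ≤ x ≤ y and P(x) = b(e^{−cx} − e^{−cL}) for y < x ≤ L. Then P is continuous on [0,L], P(0) = P(L) = 0, P ≥ 0, and for every continuous λ : [0,L] → ℝ with c ≤ λ(x) ≤ C, one has P''(x) + λ(x)P'(x) ≤ 0 for all x ≠ y, while the derivative of P jumps by P'(y⁺) − P'(y⁻) = −1 at x = y. -/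

import Mathlib

open Real Set Filter

lemma hdl (a C t : ℝ) :
    HasDerivAt (fun x => a * (1 - Real.exp (-C * x))) (a * C * Real.exp (-C * t)) t := by
  have h : HasDerivAt (fun x : ℝ => Real.exp (-C * x)) (Real.exp (-C * t) * -C) t :=
    HasDerivAt.exp (by simpa using (hasDerivAt_id t).const_mul (-C) :
      HasDerivAt (fun x : ℝ => -C * x) (-C) t)
  have := ((hasDerivAt_const t (1 : ℝ)).sub h).const_mul a
  exact this.congr_deriv (by ring)

lemma hdr (b c L t : ℝ) :
    HasDerivAt (fun x => b * (Real.exp (-c * x) - Real.exp (-c * L)))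
      (-(b * c * Real.exp (-c * t))) t := by
  have h : HasDerivAt (fun x : ℝ => Real.exp (-c * x)) (Real.exp (-c * t) * -c) t :=
    HasDerivAt.exp (by simpa using (hasDerivAt_id t).const_mul (-c) :
      HasDerivAt (fun x : ℝ => -c * x) (-c) t)
  have := (h.sub (hasDerivAt_const t (Real.exp (-c * L)))).const_mul b
  exact this.congr_deriv (by ring)

lemma hdl2 (a C t : ℝ) :
    HasDerivAt (fun x => a * C * Real.exp (-C * x)) (-(a * C * C * Real.exp (-C * t))) t := by
  have h : HasDerivAt (fun x : ℝ => Real.exp (-C * x)) (Real.exp (-C * t) * -C) t :=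
    HasDerivAt.exp (by simpa using (hasDerivAt_id t).const_mul (-C) :
      HasDerivAt (fun x : ℝ => -C * x) (-C) t)
  have := h.const_mul (a * C)
  exact this.congr_deriv (by ring)

lemma hdr2 (b c t : ℝ) :
    HasDerivAt (fun x => -(b * c * Real.exp (-c * x))) (b * c * c * Real.exp (-c * t)) t := by
  have h : HasDerivAt (fun x : ℝ => Real.exp (-c * x)) (Real.exp (-c * t) * -c) t :=
    HasDerivAt.exp (by simpa using (hasDerivAt_id t).const_mul (-c) :
      HasDerivAt (fun x : ℝ => -c * x) (-c) t)
  have := (h.const_mul (b * c)).neg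
  exact this.congr_deriv (by ring)

/-- Properties of the piecewise weight `P(x) = a(1 - e^{-Cx})` on `[0,y]`,
`P(x) = b(e^{-cx} - e^{-cL})` on `(y,L]`, where `a, b > 0` solve the matching
system: `P` is continuous on `[0,L]`, vanishes at the endpoints, is nonnegative,
satisfies `P'' + λ P' ≤ 0` away from `y` for every continuous `λ` with
`c ≤ λ ≤ C`, and the one-sided derivatives of `P` jump by `-1` at `y`. -/
theorem stmt_19 (c C L y a b : ℝ) (hc : 0 < c) (hcC : c ≤ C) (hL : 0 < L)
    (hy : y ∈ Set.Ioo 0 L) (ha : 0 < a) (hb : 0 < b)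
    (hmatch : a * (1 - Real.exp (-C * y)) = b * (Real.exp (-c * y) - Real.exp (-c * L)))
    (hslope : a * C * Real.exp (-C * y) + b * c * Real.exp (-c * y) = 1)
    (P : ℝ → ℝ)
    (hP : ∀ x : ℝ, P x = if x ≤ y then a * (1 - Real.exp (-C * x))
      else b * (Real.exp (-c * x) - Real.exp (-c * L))) :
    ContinuousOn P (Set.Icc 0 L) ∧
    P 0 = 0 ∧ P L = 0 ∧
    (∀ x ∈ Set.Icc (0 : ℝ) L, 0 ≤ P x) ∧
    (∀ lam : ℝ → ℝ, ContinuousOn lam (Set.Icc 0 L) →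
      (∀ x ∈ Set.Icc (0 : ℝ) L, c ≤ lam x ∧ lam x ≤ C) →
      ∀ x ∈ Set.Icc (0 : ℝ) L, x ≠ y →
        deriv (deriv P) x + lam x * deriv P x ≤ 0) ∧
    derivWithin P (Set.Ici y) y - derivWithin P (Set.Iic y) y = -1 := by
  have hC : 0 < C := lt_of_lt_of_le hc hcC
  have hPeq : P = fun x => if x ≤ y then a * (1 - Real.exp (-C * x))
      else b * (Real.exp (-c * x) - Real.exp (-c * L)) := funext hP
  refine ⟨?_, ?_, ?_, ?_, ?_, ?_⟩
  · -- continuity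
    rw [hPeq]
    refine Continuous.continuousOn ?_
    apply Continuous.if_le
    · continuity
    · continuity
    · exact continuous_id
    · exact continuous_const
    · intro x hx; subst hx; exact hmatch
  · rw [hP]; simp [hy.1.le]
  · rw [hP, if_neg (not_le.mpr hy.2)]
    simp
  · intro x hx
    rw [hP]
    by_cases h : x ≤ y
    · rw [if_pos h]
      have he : Real.exp (-C * x) ≤ 1 := Real.exp_le_one_iff.mpr (by nlinarith [hx.1])
      nlinarith
    · rw [if_neg h]
      have he : Real.exp (-c * L) ≤ Real.exp (-c * x) :=
        Real.exp_le_exp.mpr (by nlinarith [hx.2])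
      nlinarith
  · intro lam _ hlam x hx hxy
    rcases lt_or_gt_of_ne hxy with hlt | hgt
    · -- x < y, left piece
      have hmem : Set.Iio y ∈ nhds x := Iio_mem_nhds hlt
      have hPe : P =ᶠ[nhds x] fun t => a * (1 - Real.exp (-C * t)) := by
        filter_upwards [hmem] with t ht
        rw [hP t, if_pos ht.le]
      have hd1 : ∀ t ∈ Set.Iio y, deriv P t = a * C * Real.exp (-C * t) := by
        intro t ht
        have hPe' : P =ᶠ[nhds t] fun s => a * (1 - Real.exp (-C * s)) := by
          filter_upwards [Iio_mem_nhds ht] with s hs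
          rw [hP s, if_pos hs.le]
        rw [hPe'.deriv_eq, (hdl a C t).deriv]
      have hd1e : deriv P =ᶠ[nhds x] fun t => a * C * Real.exp (-C * t) := by
        filter_upwards [hmem] with t ht using hd1 t ht
      have hdPx : deriv P x = a * C * Real.exp (-C * x) := hd1 x hlt
      have hd2 : deriv (deriv P) x = -(a * C * C * Real.exp (-C * x)) := by
        rw [hd1e.deriv_eq, (hdl2 a C x).deriv]
      rw [hd2, hdPx]
      have hl := (hlam x hx).2
      nlinarith [Real.exp_pos (-C * x), mul_pos (mul_pos ha hC) (Real.exp_pos (-C * x))]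
    · -- x > y, right piece
      have hmem : Set.Ioi y ∈ nhds x := Ioi_mem_nhds hgt
      have hd1 : ∀ t ∈ Set.Ioi y, deriv P t = -(b * c * Real.exp (-c * t)) := by
        intro t ht
        have hPe' : P =ᶠ[nhds t] fun s => b * (Real.exp (-c * s) - Real.exp (-c * L)) := by
          filter_upwards [Ioi_mem_nhds ht] with s hs
          rw [hP s, if_neg (not_le.mpr hs)]
        rw [hPe'.deriv_eq, (hdr b c L t).deriv]
      have hd1e : deriv P =ᶠ[nhds x] fun t => -(b * c * Real.exp (-c * t)) := by
        filter_upwards [hmem] with t ht using hd1 t ht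
      have hdPx : deriv P x = -(b * c * Real.exp (-c * x)) := hd1 x hgt
      have hd2 : deriv (deriv P) x = b * c * c * Real.exp (-c * x) := by
        rw [hd1e.deriv_eq, (hdr2 b c x).deriv]
      rw [hd2, hdPx]
      have hl := (hlam x hx).1
      nlinarith [Real.exp_pos (-c * x), mul_pos (mul_pos hb hc) (Real.exp_pos (-c * x))]
  · -- jump
    have hR : derivWithin P (Set.Ici y) y = -(b * c * Real.exp (-c * y)) := by
      have hEq : Set.EqOn P (fun x => b * (Real.exp (-c * x) - Real.exp (-c * L))) (Set.Ici y) := by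
        intro t ht
        rw [hP t]
        rcases eq_or_lt_of_le (show y ≤ t from ht) with rfl | hlt
        · rw [if_pos le_rfl]; exact hmatch
        · rw [if_neg (not_le.mpr hlt)]
      rw [derivWithin_congr hEq (hEq Set.self_mem_Ici)]
      exact ((hdr b c L y).hasDerivWithinAt).derivWithin (uniqueDiffOn_Ici y y Set.self_mem_Ici)
    have hLft : derivWithin P (Set.Iic y) y = a * C * Real.exp (-C * y) := by
      have hEq : Set.EqOn P (fun x => a * (1 - Real.exp (-C * x))) (Set.Iic y) := by
        intro t ht
        rw [hP t, if_pos (show t ≤ y from ht)]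
      rw [derivWithin_congr hEq (hEq Set.self_mem_Iic)]
      exact ((hdl a C y).hasDerivWithinAt).derivWithin (uniqueDiffOn_Iic y y Set.self_mem_Iic)
    rw [hR, hLft]
    linarith
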